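/- Let 2 ≤ r < n be integers and (s₂, …, s_r) positive integers, and for 1 ≤ k ≤ n−r+1 set c_k = Σ_{k < k₂ < ⋯ < k_r ≤ n} 1/(k₂^{s₂} ⋯ k_r^{s_r}). Suppose p is a prime with n/2 < p ≤ n−r+1 and p is the largest prime ≤ n−r+1. Then for every positive integer s₁ > ν_p(c_p) + max_{2≤i≤r} s_i, the multiple harmonic sum H_n(s₁, s₂, …, s_r) is not an integer. -/

import Mathlib

/-- The multiple harmonic sum
`H_n(s₁, …, s_r) = ∑_{1 ≤ k₁ < ⋯ < k_r ≤ n} 1/(k₁^{s₁} ⋯ k_r^{s_r})`. -/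
def mhs (n r : ℕ) (s : Fin r → ℕ) : ℚ :=
  ∑ k ∈ Finset.univ.filter (fun k : Fin r → Fin n => ∀ i j : Fin r, i < j → k i < k j),
    ∏ i, (1 : ℚ) / ((k i : ℕ) + 1 : ℚ) ^ s i

/-- `c_k = ∑_{k < k₂ < ⋯ < k_r ≤ n} 1/(k₂^{s₂} ⋯ k_r^{s_r})`, the inner sum of the
multiple harmonic sum, where the tail `(k₂,…,k_r)` has `r` entries with exponents `s'`. -/
def cval (n r : ℕ) (s' : Fin r → ℕ) (k : ℕ) : ℚ :=
  ∑ kk ∈ Finset.univ.filter (fun kk : Fin r → Fin n =>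
      (∀ i j : Fin r, i < j → kk i < kk j) ∧ ∀ i, k ≤ (kk i : ℕ)),
    ∏ i, (1 : ℚ) / ((kk i : ℕ) + 1 : ℚ) ^ s' i

private lemma aux_val_sum_le {p : ℕ} [Fact p.Prime] {α : Type*} {S : Finset α} {F : α → ℚ}
    {c : ℤ} (hF : ∀ i ∈ S, 0 < F i) (hv : ∀ i ∈ S, c ≤ padicValRat p (F i))
    (hS : S.Nonempty) : c ≤ padicValRat p (∑ i ∈ S, F i) := by
  classical
  induction S using Finset.cons_induction with
  | empty => exact absurd hS (by simp)
  | cons a s ha ih =>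
    rw [Finset.sum_cons]
    by_cases hs : s = ∅
    · subst hs; simpa using hv a (Finset.mem_cons_self a _)
    · have hsne : s.Nonempty := Finset.nonempty_iff_ne_empty.mpr hs
      have h1 : c ≤ padicValRat p (F a) := hv a (Finset.mem_cons_self a _)
      have h2 : c ≤ padicValRat p (∑ i ∈ s, F i) :=
        ih (fun i hi => hF i (Finset.mem_cons_of_mem hi))
          (fun i hi => hv i (Finset.mem_cons_of_mem hi)) hsne
      have hpos : 0 < F a + ∑ i ∈ s, F i := by
        have := hF a (Finset.mem_cons_self a _)
        have h3 : 0 < ∑ i ∈ s, F i :=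
          Finset.sum_pos (fun i hi => hF i (Finset.mem_cons_of_mem hi)) hsne
        linarith
      calc c ≤ min (padicValRat p (F a)) (padicValRat p (∑ i ∈ s, F i)) := le_min h1 h2
        _ ≤ _ := padicValRat.min_le_padicValRat_add hpos.ne'

private lemma aux_val_prod {p : ℕ} [Fact p.Prime] {α : Type*} (S : Finset α) (F : α → ℚ)
    (hF : ∀ i ∈ S, F i ≠ 0) :
    padicValRat p (∏ i ∈ S, F i) = ∑ i ∈ S, padicValRat p (F i) := by
  classical
  induction S using Finset.cons_induction with
  | empty => simp
  | cons a s ha ih =>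
    rw [Finset.prod_cons, Finset.sum_cons,
      padicValRat.mul (hF a (Finset.mem_cons_self a _))
        (Finset.prod_ne_zero_iff.mpr (fun i hi => hF i (Finset.mem_cons_of_mem hi))),
      ih (fun i hi => hF i (Finset.mem_cons_of_mem hi))]

theorem mhs_not_integer_of_exponent_gt (r n p : ℕ) (hr : 1 ≤ r) (hn : r + 2 ≤ n)
    (s' : Fin r → ℕ) (hs' : ∀ i, 0 < s' i)
    (hp : p.Prime) (hp1 : (n : ℚ) / 2 < (p : ℚ)) (hp2 : p ≤ n - r)
    (hpmax : ∀ q : ℕ, q.Prime → q ≤ n - r → q ≤ p)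
    (s₁ : ℕ) (hs₁ : 0 < s₁)
    (hbound : padicValRat p (cval n r s' p) + ((Finset.univ.sup s' : ℕ) : ℤ) < (s₁ : ℤ)) :
    ¬∃ m : ℤ, mhs n (r + 1) (Fin.cons s₁ s') = (m : ℚ) := by
  rintro ⟨m, hm⟩
  haveI : Fact p.Prime := ⟨hp⟩
  have hp2' : 2 ≤ p := hp.two_le
  have hpn : p + r ≤ n := by omega
  have hn2p : n < 2 * p := by
    have : (n : ℚ) < 2 * p := by linarith
    exact_mod_cast this
  set M : ℕ := Finset.univ.sup s' with hMdef
  have hM1 : 1 ≤ M := le_trans (hs' ⟨0, hr⟩) (Finset.le_sup (Finset.mem_univ _))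
  set p0 : Fin n := ⟨p - 1, by omega⟩ with hp0
  set σ : Fin (r + 1) → ℕ := Fin.cons s₁ s' with hσ
  set t : (Fin (r + 1) → Fin n) → ℚ :=
    fun k => ∏ i, (1 : ℚ) / ((k i : ℕ) + 1 : ℚ) ^ σ i with ht
  set S : Finset (Fin (r + 1) → Fin n) :=
    Finset.univ.filter (fun k => ∀ i j : Fin (r + 1), i < j → k i < k j) with hS
  have hmhs : mhs n (r + 1) σ = ∑ k ∈ S, t k := rfl
  -- head-at-p part
  have hT : ∑ k ∈ S.filter (fun k => k 0 = p0), t k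
      = (1 / (p : ℚ) ^ s₁) * cval n r s' p := by
    rw [cval, Finset.mul_sum]
    refine Finset.sum_nbij' (fun k => Fin.tail k) (fun kk => Fin.cons p0 kk) ?_ ?_ ?_ ?_ ?_
    · intro k hk
      simp only [Finset.mem_filter, Finset.mem_univ, true_and, hS] at hk ⊢
      obtain ⟨hmono, hk0⟩ := hk
      constructor
      · intro i j hij
        exact hmono i.succ j.succ (by simpa using hij)
      · intro i
        have h1 := hmono 0 i.succ (Fin.succ_pos i)
        rw [hk0] at h1
        have h2 : (p0 : ℕ) < (k i.succ : ℕ) := h1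
        simp only [hp0] at h2
        unfold Fin.tail
        omega
    · intro kk hkk
      simp only [Finset.mem_filter, Finset.mem_univ, true_and, hS] at hkk ⊢
      obtain ⟨hmono, hge⟩ := hkk
      refine ⟨?_, by simp⟩
      intro i j hij
      cases i using Fin.cases with
      | zero =>
        cases j using Fin.cases with
        | zero => exact absurd hij (lt_irrefl _)
        | succ j =>
          simp only [Fin.cons_zero, Fin.cons_succ]
          have := hge j
          show (p0 : ℕ) < (kk j : ℕ)
          simp only [hp0]
          omega
      | succ i =>
        cases j using Fin.cases with
        | zero => exact absurd hij (by simp [Fin.lt_def])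
        | succ j =>
          simp only [Fin.cons_succ]
          exact hmono i j (by simpa using hij)
    · intro k hk
      simp only [Finset.mem_filter, hS] at hk
      show Fin.cons p0 (Fin.tail k) = k
      rw [← hk.2]
      exact Fin.cons_self_tail k
    · intro kk _
      funext i
      simp [Fin.tail]
    · intro k hk
      simp only [Finset.mem_filter, hS] at hk
      have hk0 : ((k 0 : Fin n) : ℕ) + 1 = p := by rw [hk.2]; simp only [hp0]; omega
      have hk0' : ((k 0 : ℕ) : ℚ) + 1 = (p : ℚ) := by
        exact_mod_cast congrArg (Nat.cast (R := ℚ)) hk0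
      rw [ht]
      simp only
      rw [Fin.prod_univ_succ]
      congr 1
      simp only [hk0', hσ, Fin.cons_zero]
  -- positivity
  have htpos : ∀ k : Fin (r + 1) → Fin n, 0 < t k := by
    intro k
    rw [ht]
    apply Finset.prod_pos
    intro i _
    positivity
  have hcpos : 0 < cval n r s' p := by
    rw [cval]
    apply Finset.sum_pos
    · intro kk _
      apply Finset.prod_pos
      intro i _
      positivity
    · refine ⟨fun i => ⟨p + (i : ℕ), by have := i.isLt; omega⟩, ?_⟩
      simp only [Finset.mem_filter, Finset.mem_univ, true_and]
      constructor
      · intro i j hij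
        have : (i : ℕ) < (j : ℕ) := hij
        show p + (i : ℕ) < p + (j : ℕ)
        omega
      · intro i
        simp
  -- valuation of each factor
  have hfac : ∀ (k : Fin (r + 1) → Fin n) (i : Fin (r + 1)),
      padicValRat p ((1 : ℚ) / ((k i : ℕ) + 1 : ℚ) ^ σ i)
        = -((σ i : ℤ) * (padicValNat p ((k i : ℕ) + 1) : ℤ)) := by
    intro k i
    have hv : ((k i : ℕ) : ℚ) + 1 = (((k i : ℕ) + 1 : ℕ) : ℚ) := by push_cast; ring
    rw [one_div, padicValRat.inv, hv,
      padicValRat.pow (q := (((k i : ℕ) + 1 : ℕ) : ℚ)), padicValRat.of_nat]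
  -- p does not divide numbers ≤ n other than p
  have hdvd : ∀ v : ℕ, 1 ≤ v → v ≤ n → v ≠ p → padicValNat p v = 0 := by
    intro v h1 h2 h3
    apply padicValNat.eq_zero_of_not_dvd
    rintro ⟨m, rfl⟩
    have hmge : 2 ≤ m := by
      rcases m with _ | _ | m
      · simp at h1
      · simp at h3
      · omega
    have h4 : 2 * p ≤ p * m := by nlinarith
    omega
  -- lower bound on the valuation of every other term
  have hBval : ∀ k ∈ S.filter (fun k => ¬ k 0 = p0), -(M : ℤ) ≤ padicValRat p (t k) := by
    intro k hk
    rw [Finset.mem_filter] at hk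
    obtain ⟨hkS, hk0⟩ := hk
    rw [hS, Finset.mem_filter] at hkS
    have hmono := hkS.2
    have hsm : StrictMono k := fun a b h => hmono a b h
    have hval : padicValRat p (t k)
        = ∑ i, -((σ i : ℤ) * (padicValNat p ((k i : ℕ) + 1) : ℤ)) := by
      rw [ht]
      rw [aux_val_prod _ _ (fun i _ => by positivity)]
      exact Finset.sum_congr rfl (fun i _ => hfac k i)
    rw [hval]
    by_cases hex : ∃ j : Fin (r + 1), (k j : ℕ) + 1 = p
    · obtain ⟨j, hj⟩ := hex
      have hj0 : j ≠ 0 := by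
        rintro rfl
        apply hk0
        apply Fin.ext
        show (k 0 : ℕ) = (p0 : ℕ)
        simp only [hp0]
        omega
      have hsum : ∑ i, -((σ i : ℤ) * (padicValNat p ((k i : ℕ) + 1) : ℤ))
          = -((σ j : ℤ) * (padicValNat p ((k j : ℕ) + 1) : ℤ)) := by
        apply Finset.sum_eq_single
        · intro i _ hij
          have hne : (k i : ℕ) + 1 ≠ p := by
            intro h
            apply hij
            apply hsm.injective
            apply Fin.ext
            omega
          rw [hdvd _ (by omega) (by have := (k i).isLt; omega) hne]
          simp
        · intro h
          exact absurd (Finset.mem_univ j) h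
      rw [hsum, hj, padicValNat.self hp.one_lt]
      obtain ⟨j', rfl⟩ : ∃ j', j = Fin.succ j' := ⟨j.pred hj0, (Fin.succ_pred j hj0).symm⟩
      have h1 : σ (Fin.succ j') = s' j' := by simp [hσ]
      have h2 : s' j' ≤ M := Finset.le_sup (Finset.mem_univ _)
      rw [h1]
      push_cast
      omega
    · push_neg at hex
      have hz : ∀ i ∈ Finset.univ, -((σ i : ℤ) * (padicValNat p ((k i : ℕ) + 1) : ℤ)) = 0 := by
        intro i _
        rw [hdvd _ (by omega) (by have := (k i).isLt; omega) (hex i)]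
        simp
      rw [Finset.sum_congr rfl hz]
      simp
  -- combine
  have hTne : (0 : ℚ) < ∑ k ∈ S.filter (fun k => k 0 = p0), t k := by
    rw [hT]
    have : (0 : ℚ) < 1 / (p : ℚ) ^ s₁ := by positivity
    exact mul_pos this hcpos
  have hTval : padicValRat p (∑ k ∈ S.filter (fun k => k 0 = p0), t k)
      = -(s₁ : ℤ) + padicValRat p (cval n r s' p) := by
    rw [hT, padicValRat.mul (by positivity) (ne_of_gt hcpos), one_div,
      padicValRat.self_pow_inv]
  have hTlt : padicValRat p (∑ k ∈ S.filter (fun k => k 0 = p0), t k) < -(M : ℤ) := by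
    rw [hTval]
    linarith
  have hHeq : mhs n (r + 1) σ
      = (∑ k ∈ S.filter (fun k => k 0 = p0), t k)
        + ∑ k ∈ S.filter (fun k => ¬ k 0 = p0), t k := by
    rw [hmhs, Finset.sum_filter_add_sum_filter_not S (fun k => k 0 = p0) t]
  have hfin : padicValRat p (mhs n (r + 1) σ) < -(M : ℤ) := by
    by_cases hR0 : ∑ k ∈ S.filter (fun k => ¬ k 0 = p0), t k = 0
    · rw [hHeq, hR0, add_zero]
      exact hTlt
    · have hne : (S.filter (fun k => ¬ k 0 = p0)).Nonempty :=
        Finset.nonempty_of_sum_ne_zero hR0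
      have hRpos : 0 < ∑ k ∈ S.filter (fun k => ¬ k 0 = p0), t k :=
        Finset.sum_pos (fun k _ => htpos k) hne
      have hRval : -(M : ℤ) ≤ padicValRat p (∑ k ∈ S.filter (fun k => ¬ k 0 = p0), t k) :=
        aux_val_sum_le (fun k _ => htpos k) hBval hne
      rw [hHeq, padicValRat.add_eq_of_lt (by positivity) (ne_of_gt hTne) (ne_of_gt hRpos)
        (lt_of_lt_of_le hTlt hRval)]
      exact hTlt
  have hint : (0 : ℤ) ≤ padicValRat p (mhs n (r + 1) σ) := by
    rw [hm, padicValRat.of_int]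
    exact Int.ofNat_nonneg _
  have hM1' : (1 : ℤ) ≤ (M : ℤ) := by exact_mod_cast hM1
  linarith
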